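/- Let m ≥ 2 be an integer and let C_{k,n} be the coefficients of the polynomials from differentiating e^{λ x^m/m}. Then for every k ≥ 4, C_{k,2} ≤ m² k⁴ / 2. -/

import Mathlib

open Polynomial

private lemma subInjAux {T A B : ℕ} (hA : A ≤ T) (hB : B ≤ T) (h : T - A = T - B) : A = B := by
  omega

private lemma arithFactsAux {M T A B e : ℕ} (hAB : A = B + (M + 1))
    (he : e = T + M - A) (hAle : A ≤ T + M) :
    e + 1 = T - B ∧ B ≤ T ∧ (A ≤ T → (M ≤ e ∧ e - M = T - A)) ∧ (T < A → e < M) := by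
  omega

private lemma coeffEqAux (M : ℕ) (hM : 1 ≤ M) (lam : ℂ)
    (p : ℕ → Polynomial ℂ) (C : ℕ → ℕ → ℕ)
    (hC : ∀ k : ℕ, 1 ≤ k →
      p k = ∑ n ∈ Finset.range (k * M / (M + 1) + 1),
        Polynomial.C (lam ^ (k - n) * (C k n : ℂ)) * Polynomial.X ^ (M * k - n * (M + 1)))
    (k : ℕ) (hk : 1 ≤ k) (n : ℕ) (hn : n * (M + 1) ≤ M * k) :
    (p k).coeff (M * k - n * (M + 1)) = lam ^ (k - n) * C k n := by
  have hmem : ∀ b, b ∈ Finset.range (k * M / (M + 1) + 1) ↔ b * (M + 1) ≤ M * k := by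
    intro b
    rw [Finset.mem_range, Nat.lt_succ_iff, Nat.le_div_iff_mul_le (by omega : 0 < M + 1),
      mul_comm k M]
  rw [hC k hk, Polynomial.finset_sum_coeff, Finset.sum_eq_single n]
  · rw [Polynomial.coeff_C_mul_X_pow, if_pos rfl]
  · intro b hb hbn
    have hbm : b * (M + 1) ≤ M * k := (hmem b).mp hb
    have hne : M * k - n * (M + 1) ≠ M * k - b * (M + 1) := by
      intro h
      exact hbn (Nat.eq_of_mul_eq_mul_right (by omega : 0 < M + 1)
        (subInjAux hn hbm h)).symm
    rw [Polynomial.coeff_C_mul_X_pow, if_neg hne]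
  · intro hn'
    exact absurd ((hmem n).mpr hn) hn'

private lemma coeffZeroAux (M : ℕ) (hM : 1 ≤ M) (lam : ℂ)
    (p : ℕ → Polynomial ℂ) (C : ℕ → ℕ → ℕ)
    (hC : ∀ k : ℕ, 1 ≤ k →
      p k = ∑ n ∈ Finset.range (k * M / (M + 1) + 1),
        Polynomial.C (lam ^ (k - n) * (C k n : ℂ)) * Polynomial.X ^ (M * k - n * (M + 1)))
    (k : ℕ) (hk : 1 ≤ k) (e : ℕ)
    (he : ∀ n, n * (M + 1) ≤ M * k → e ≠ M * k - n * (M + 1)) :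
    (p k).coeff e = 0 := by
  have hmem : ∀ b, b ∈ Finset.range (k * M / (M + 1) + 1) → b * (M + 1) ≤ M * k := by
    intro b hb
    rw [Finset.mem_range, Nat.lt_succ_iff, Nat.le_div_iff_mul_le (by omega : 0 < M + 1),
      mul_comm k M] at hb
    exact hb
  rw [hC k hk, Polynomial.finset_sum_coeff]
  refine Finset.sum_eq_zero fun b hb => ?_
  rw [Polynomial.coeff_C_mul_X_pow, if_neg (he b (hmem b hb))]

private lemma recurrenceAux (M : ℕ) (hM : 1 ≤ M) (lam : ℂ) (hlam : lam ≠ 0)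
    (p : ℕ → Polynomial ℂ)
    (hprec : ∀ k, p (k + 1) =
      Polynomial.C lam * Polynomial.X ^ M * p k + Polynomial.derivative (p k))
    (C : ℕ → ℕ → ℕ)
    (hC : ∀ k : ℕ, 1 ≤ k →
      p k = ∑ n ∈ Finset.range (k * M / (M + 1) + 1),
        Polynomial.C (lam ^ (k - n) * (C k n : ℂ)) * Polynomial.X ^ (M * k - n * (M + 1)))
    (k n : ℕ) (hk : 1 ≤ k) (hn1 : 1 ≤ n)
    (h1 : n * (M + 1) ≤ M * (k + 1)) (h2 : (n - 1) * (M + 1) ≤ M * k) :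
    C (k + 1) n = (if n * (M + 1) ≤ M * k then C k n else 0)
      + (M * k - (n - 1) * (M + 1)) * C k (n - 1) := by
  have hAB : n * (M + 1) = (n - 1) * (M + 1) + (M + 1) := by
    cases n with
    | zero => exact absurd hn1 (by omega)
    | succ t =>
      simp only [Nat.add_sub_cancel]
      ring
  have heq : M * (k + 1) = M * k + M := by ring
  have hnk : n ≤ k := by
    by_contra hcon
    push_neg at hcon
    have h5 : (k + 1) * (M + 1) ≤ n * (M + 1) := Nat.mul_le_mul_right _ hcon
    have h6 : (k + 1) * (M + 1) = M * (k + 1) + (k + 1) := by ring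
    omega
  have hE : M * (k + 1) - n * (M + 1) = M * k + M - n * (M + 1) := by rw [heq]
  obtain ⟨hE1, hBT, hposc, hnegc⟩ :=
    arithFactsAux (M := M) (T := M * k) (A := n * (M + 1)) (B := (n - 1) * (M + 1))
      (e := M * (k + 1) - n * (M + 1)) hAB hE (by omega)
  have lhs : (p (k + 1)).coeff (M * (k + 1) - n * (M + 1)) =
      lam ^ (k + 1 - n) * C (k + 1) n :=
    coeffEqAux M hM lam p C hC (k + 1) (by omega) n h1
  have c2 : (p k).coeff (M * (k + 1) - n * (M + 1) + 1) =
      lam ^ (k - (n - 1)) * C k (n - 1) := by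
    rw [hE1]
    exact coeffEqAux M hM lam p C hC k hk (n - 1) h2
  have hcast : ((M * (k + 1) - n * (M + 1) : ℕ) : ℂ) + 1 =
      ((M * k - (n - 1) * (M + 1) : ℕ) : ℂ) := by
    exact_mod_cast congrArg (Nat.cast (R := ℂ)) hE1
  have hp1 : k + 1 - n = k - n + 1 := by omega
  have hp2 : k - (n - 1) = k - n + 1 := by omega
  by_cases hcase : n * (M + 1) ≤ M * k
  · obtain ⟨hMe, hEm⟩ := hposc hcase
    have c1 : (p k).coeff (M * (k + 1) - n * (M + 1) - M) = lam ^ (k - n) * C k n := by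
      rw [hEm]
      exact coeffEqAux M hM lam p C hC k hk n hcase
    have main : lam ^ (k + 1 - n) * (C (k + 1) n : ℂ) =
        lam * (lam ^ (k - n) * C k n)
          + lam ^ (k - (n - 1)) * C k (n - 1) * ((M * k - (n - 1) * (M + 1) : ℕ) : ℂ) := by
      rw [← lhs, hprec k, Polynomial.coeff_add, Polynomial.coeff_derivative, mul_right_comm,
        Polynomial.coeff_mul_X_pow', if_pos hMe, Polynomial.coeff_C_mul, c1, c2, hcast]
    have key : (C (k + 1) n : ℂ) =
        (C k n : ℂ) + ((M * k - (n - 1) * (M + 1) : ℕ) : ℂ) * (C k (n - 1) : ℂ) := by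
      apply mul_left_cancel₀ (pow_ne_zero (k - n + 1) hlam)
      calc lam ^ (k - n + 1) * (C (k + 1) n : ℂ)
          = lam ^ (k + 1 - n) * (C (k + 1) n : ℂ) := by rw [hp1]
        _ = lam * (lam ^ (k - n) * C k n)
            + lam ^ (k - (n - 1)) * C k (n - 1) * ((M * k - (n - 1) * (M + 1) : ℕ) : ℂ) := main
        _ = lam ^ (k - n + 1) *
            ((C k n : ℂ) + ((M * k - (n - 1) * (M + 1) : ℕ) : ℂ) * (C k (n - 1) : ℂ)) := by
            rw [hp2]; ring
    have key2 : C (k + 1) n = C k n + (M * k - (n - 1) * (M + 1)) * C k (n - 1) := by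
      exact_mod_cast key
    rw [if_pos hcase]
    exact key2
  · push_neg at hcase
    have hlt := hnegc hcase
    have main : lam ^ (k + 1 - n) * (C (k + 1) n : ℂ) =
        lam * 0
          + lam ^ (k - (n - 1)) * C k (n - 1) * ((M * k - (n - 1) * (M + 1) : ℕ) : ℂ) := by
      rw [← lhs, hprec k, Polynomial.coeff_add, Polynomial.coeff_derivative, mul_right_comm,
        Polynomial.coeff_mul_X_pow', if_neg (by omega), c2, hcast]
      ring
    have key : (C (k + 1) n : ℂ) =
        ((M * k - (n - 1) * (M + 1) : ℕ) : ℂ) * (C k (n - 1) : ℂ) := by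
      apply mul_left_cancel₀ (pow_ne_zero (k - n + 1) hlam)
      calc lam ^ (k - n + 1) * (C (k + 1) n : ℂ)
          = lam ^ (k + 1 - n) * (C (k + 1) n : ℂ) := by rw [hp1]
        _ = lam * 0
            + lam ^ (k - (n - 1)) * C k (n - 1) * ((M * k - (n - 1) * (M + 1) : ℕ) : ℂ) := main
        _ = lam ^ (k - n + 1) *
            (((M * k - (n - 1) * (M + 1) : ℕ) : ℂ) * (C k (n - 1) : ℂ)) := by
            rw [hp2]; ring
    have key2 : C (k + 1) n = (M * k - (n - 1) * (M + 1)) * C k (n - 1) := by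
      exact_mod_cast key
    rw [if_neg (by omega)]
    omega

private lemma ck0Aux (M : ℕ) (hM : 1 ≤ M) (lam : ℂ) (hlam : lam ≠ 0)
    (p : ℕ → Polynomial ℂ) (hp0 : p 0 = 1)
    (hprec : ∀ k, p (k + 1) =
      Polynomial.C lam * Polynomial.X ^ M * p k + Polynomial.derivative (p k))
    (C : ℕ → ℕ → ℕ)
    (hC : ∀ k : ℕ, 1 ≤ k →
      p k = ∑ n ∈ Finset.range (k * M / (M + 1) + 1),
        Polynomial.C (lam ^ (k - n) * (C k n : ℂ)) * Polynomial.X ^ (M * k - n * (M + 1)))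
    : ∀ k, 1 ≤ k → C k 0 = 1 := by
  have base : C 1 0 = 1 := by
    have h := coeffEqAux M hM lam p C hC 1 le_rfl 0 (by simp)
    have hp1 : p 1 = Polynomial.C lam * Polynomial.X ^ M := by
      rw [hprec 0, hp0]
      simp
    rw [hp1] at h
    simp only [Nat.zero_mul, Nat.sub_zero, Nat.mul_one, pow_one] at h
    rw [Polynomial.coeff_C_mul_X_pow, if_pos rfl] at h
    have h2 : lam * (1 : ℂ) = lam * ((C 1 0 : ℕ) : ℂ) := by
      rw [mul_one]; exact h
    have h3 := mul_left_cancel₀ hlam h2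
    exact_mod_cast h3.symm
  intro k hk
  induction k, hk using Nat.le_induction with
  | base => exact base
  | succ k hk ih =>
    have heq : M * (k + 1) = M * k + M := by ring
    have lhs : (p (k + 1)).coeff (M * (k + 1) - 0 * (M + 1)) =
        lam ^ (k + 1 - 0) * C (k + 1) 0 :=
      coeffEqAux M hM lam p C hC (k + 1) (by omega) 0 (by simp)
    simp only [Nat.zero_mul, Nat.sub_zero] at lhs
    have c1 : (p k).coeff (M * (k + 1) - M) = lam ^ (k - 0) * C k 0 := by
      have h := coeffEqAux M hM lam p C hC k hk 0 (by simp)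
      simp only [Nat.zero_mul, Nat.sub_zero] at h
      have hsub : M * (k + 1) - M = M * k := by omega
      rw [hsub]
      exact h
    rw [Nat.sub_zero] at c1
    have c2 : (p k).coeff (M * (k + 1) + 1) = 0 := by
      apply coeffZeroAux M hM lam p C hC k hk
      intro n hn
      have h3 : M * k - n * (M + 1) ≤ M * k := Nat.sub_le _ _
      omega
    have hrw : lam ^ (k + 1) * (C (k + 1) 0 : ℂ) = lam * (lam ^ k * C k 0) := by
      rw [← lhs, hprec k, Polynomial.coeff_add, Polynomial.coeff_derivative, mul_right_comm,
        Polynomial.coeff_mul_X_pow', if_pos (by omega : M ≤ M * (k + 1)),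
        Polynomial.coeff_C_mul, c1, c2]
      ring
    have key : (C (k + 1) 0 : ℂ) = (C k 0 : ℂ) := by
      apply mul_left_cancel₀ (pow_ne_zero (k + 1) hlam)
      rw [hrw]
      ring
    have key2 : C (k + 1) 0 = C k 0 := by exact_mod_cast key
    rw [key2, ih]

theorem coefficient_two_bound (m : ℕ) (hm : 2 ≤ m) (lam : ℂ) (hlam : lam ≠ 0)
    (p : ℕ → Polynomial ℂ) (hp0 : p 0 = 1)
    (hprec : ∀ k, p (k + 1) =
      Polynomial.C lam * Polynomial.X ^ (m - 1) * p k + Polynomial.derivative (p k))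
    (C : ℕ → ℕ → ℕ)
    (hC : ∀ k : ℕ, 1 ≤ k →
      p k = ∑ n ∈ Finset.range (k * (m - 1) / m + 1),
        Polynomial.C (lam ^ (k - n) * (C k n : ℂ)) * Polynomial.X ^ ((m - 1) * k - n * m)) :
    ∀ k : ℕ, 4 ≤ k → (C k 2 : ℝ) ≤ (m : ℝ) ^ 2 * (k : ℝ) ^ 4 / 2 := by
  obtain ⟨M, rfl⟩ : ∃ M, m = M + 1 := ⟨m - 1, by omega⟩
  have hM : 1 ≤ M := by omega
  simp only [Nat.add_sub_cancel] at hprec hC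
  have hck0 := ck0Aux M hM lam hlam p hp0 hprec C hC
  have hc21 : C 2 1 = M := by
    have h := recurrenceAux M hM lam hlam p hprec C hC 1 1 le_rfl le_rfl
      (by omega) (by omega)
    rw [h, if_neg (by omega)]
    simp [hck0 1 le_rfl]
  have hck1 : ∀ k, 2 ≤ k → C k 1 ≤ (M + 1) * k ^ 2 := by
    intro k hk
    induction k, hk using Nat.le_induction with
    | base => rw [hc21]; nlinarith
    | succ k hk ih =>
      have hmk : M + 1 ≤ M * k := by
        have h := Nat.mul_le_mul (le_refl M) hk
        omega
      have heq : M * (k + 1) = M * k + M := by ring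
      have hrec := recurrenceAux M hM lam hlam p hprec C hC k 1 (by omega) le_rfl
        (by omega) (by omega)
      rw [hrec, if_pos (by omega)]
      simp only [Nat.sub_self, zero_mul, Nat.sub_zero, hck0 k (by omega), mul_one]
      have hmk2 : M * k ≤ (M + 1) * k := Nat.mul_le_mul (by omega) (le_refl k)
      nlinarith
  have hck2 : ∀ k, 3 ≤ k → 2 * (M + 1) ≤ M * k → 2 * C k 2 ≤ (M + 1) ^ 2 * k ^ 4 := by
    intro k hk
    induction k, hk using Nat.le_induction with
    | base =>
      intro h3
      have hrec := recurrenceAux M hM lam hlam p hprec C hC 2 2 (by omega) (by omega)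
        (by omega) (by omega)
      rw [hrec, if_neg (by omega)]
      simp only [show (2:ℕ) - 1 = 1 from rfl, one_mul, zero_add, hc21]
      have hle : M * 2 - (M + 1) ≤ M := by omega
      have h4 : (M * 2 - (M + 1)) * M ≤ M * M := Nat.mul_le_mul hle (le_refl M)
      nlinarith
    | succ k hk ih =>
      intro h3
      have hmk : M + 1 ≤ M * k := by
        have h := Nat.mul_le_mul (le_refl M) hk
        omega
      have heq : M * (k + 1) = M * k + M := by ring
      have hrec := recurrenceAux M hM lam hlam p hprec C hC k 2 (by omega) (by omega)
        (by omega) (by omega)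
      simp only [show (2:ℕ) - 1 = 1 from rfl, one_mul] at hrec
      have hck1k : C k 1 ≤ (M + 1) * k ^ 2 := hck1 k (by omega)
      have hfac : M * k - (M + 1) ≤ (M + 1) * k :=
        le_trans (Nat.sub_le _ _) (Nat.mul_le_mul (by omega) (le_refl k))
      have hprod : (M * k - (M + 1)) * C k 1 ≤
          (M + 1) * k * ((M + 1) * k ^ 2) := Nat.mul_le_mul hfac hck1k
      rw [hrec]
      by_cases hc : 2 * (M + 1) ≤ M * k
      · rw [if_pos hc]
        have hih := ih hc
        have hfin : (M + 1) ^ 2 * k ^ 4 + 2 * ((M + 1) * k * ((M + 1) * k ^ 2)) ≤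
            (M + 1) ^ 2 * (k + 1) ^ 4 := by nlinarith
        calc 2 * (C k 2 + (M * k - (M + 1)) * C k 1)
            = 2 * C k 2 + 2 * ((M * k - (M + 1)) * C k 1) := by ring
          _ ≤ (M + 1) ^ 2 * k ^ 4 + 2 * ((M + 1) * k * ((M + 1) * k ^ 2)) := by omega
          _ ≤ (M + 1) ^ 2 * (k + 1) ^ 4 := hfin
      · rw [if_neg hc]
        have hfin : 2 * ((M + 1) * k * ((M + 1) * k ^ 2)) ≤
            (M + 1) ^ 2 * (k + 1) ^ 4 := by nlinarith
        calc 2 * (0 + (M * k - (M + 1)) * C k 1)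
            = 2 * ((M * k - (M + 1)) * C k 1) := by ring
          _ ≤ 2 * ((M + 1) * k * ((M + 1) * k ^ 2)) := by omega
          _ ≤ (M + 1) ^ 2 * (k + 1) ^ 4 := hfin
  intro k hk
  have hcond : 2 * (M + 1) ≤ M * k := by
    have h := Nat.mul_le_mul (le_refl M) hk
    omega
  have hbound := hck2 k (by omega) hcond
  have hcast : (2 : ℝ) * ((C k 2 : ℕ) : ℝ) ≤ (((M + 1 : ℕ) : ℝ)) ^ 2 * ((k : ℕ) : ℝ) ^ 4 := by
    exact_mod_cast hbound
  push_cast at hcast ⊢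
  linarith
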